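/- Let p ∈ (1,∞) and α < 1 - 1/p. Suppose K : (0,∞) → ℂ is continuous with |K(t)| ≤ M/t for all t > 0. Then the operator (Tf)(t) = ∫_0^t K(t-s) [(t/s)^α - 1] f(s) ds is bounded on L^p(0,∞) with norm at most c(p,α)·M. (Scalar version of the Prüss–Simonett perturbation estimate.) -/

import Mathlib

open MeasureTheory Set Real
open scoped ENNReal NNReal

namespace Stmt6Aux

variable {α p q : ℝ}

/-- The dominating positive kernel. -/
noncomputable def W (α t s : ℝ) : ℝ≥0∞ :=
  if 0 < s ∧ s < t then ENNReal.ofReal (|(t / s) ^ α - 1| / (t - s)) else 0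

lemma W_ne_top (α t s : ℝ) : W α t s ≠ ⊤ := by
  unfold W; split <;> simp

lemma W_meas (α : ℝ) : Measurable (fun z : ℝ × ℝ => W α z.1 z.2) := by
  unfold W
  refine Measurable.ite ?_ ?_ measurable_const
  · exact (measurableSet_lt measurable_const measurable_snd).inter
      (measurableSet_lt measurable_snd measurable_fst)
  · exact ((((measurable_fst.div measurable_snd).pow_const α).sub
      measurable_const).abs.div (measurable_fst.sub measurable_snd)).ennreal_ofReal

lemma W_meas_left (α t : ℝ) : Measurable (W α t) :=
  (W_meas α).comp measurable_prodMk_left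

lemma W_meas_right (α s : ℝ) : Measurable (fun t => W α t s) :=
  (W_meas α).comp measurable_prodMk_right

lemma lint_scale {F : ℝ → ℝ≥0∞} (hF : Measurable F) {a : ℝ} (ha : 0 < a) :
    ∫⁻ x, F (a * x) = ENNReal.ofReal a⁻¹ * ∫⁻ x, F x := by
  rw [← lintegral_map hF (measurable_const_mul a), Real.map_volume_mul_left ha.ne',
    abs_of_pos (inv_pos.2 ha), lintegral_smul_measure, smul_eq_mul]

lemma lint_scale' {F : ℝ → ℝ≥0∞} (hF : Measurable F) {a : ℝ} (ha : 0 < a) :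
    ∫⁻ x, F x = ENNReal.ofReal a * ∫⁻ x, F (a * x) := by
  rw [lint_scale hF ha, ← mul_assoc, ← ENNReal.ofReal_mul ha.le, mul_inv_cancel₀ ha.ne',
    ENNReal.ofReal_one, one_mul]

lemma cond_iff {t u : ℝ} (ht : 0 < t) : (0 < t * u ∧ t * u < t) ↔ (0 < u ∧ u < 1) := by
  constructor
  · rintro ⟨h1, h2⟩
    constructor
    · by_contra hu; push_neg at hu
      exact absurd h1 (not_lt.2 (mul_nonpos_of_nonneg_of_nonpos ht.le hu))
    · by_contra hu; push_neg at hu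
      exact absurd h2 (not_lt.2 (le_mul_of_one_le_right ht.le hu))
  · rintro ⟨h1, h2⟩
    exact ⟨mul_pos ht h1, by nlinarith⟩


lemma row_id (α : ℝ) (c : ℝ) {t : ℝ} (ht : 0 < t) :
    ∫⁻ s, W α t s * ENNReal.ofReal (s ^ c) =
      ENNReal.ofReal (t ^ c) * ∫⁻ u, W α 1 u * ENNReal.ofReal (u ^ c) := by
  have hmeas : Measurable fun s => W α t s * ENNReal.ofReal (s ^ c) :=
    (W_meas_left α t).mul ((measurable_id.pow_const c).ennreal_ofReal)
  rw [lint_scale' hmeas ht]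
  have hpt : ∀ u, W α t (t * u) * ENNReal.ofReal ((t * u) ^ c)
      = (ENNReal.ofReal t⁻¹ * ENNReal.ofReal (t ^ c)) *
        (W α 1 u * ENNReal.ofReal (u ^ c)) := by
    intro u
    by_cases h : 0 < u ∧ u < 1
    · have h1u : (0:ℝ) < 1 - u := by linarith [h.2]
      have h1 : W α t (t * u) = ENNReal.ofReal (|(1 / u) ^ α - 1| / (t * (1 - u))) := by
        rw [W, if_pos ((cond_iff ht).2 h)]
        rw [show t / (t * u) = 1 / u by rw [← div_div, div_self ht.ne'], show t - t * u = t * (1 - u) by ring]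
      have h2 : W α 1 u = ENNReal.ofReal (|(1 / u) ^ α - 1| / (1 - u)) := by
        rw [W, if_pos h]
      rw [h1, h2, Real.mul_rpow ht.le h.1.le,
        ← ENNReal.ofReal_mul (div_nonneg (abs_nonneg _) (by nlinarith)),
        ← ENNReal.ofReal_mul (inv_nonneg.2 ht.le),
        ← ENNReal.ofReal_mul (div_nonneg (abs_nonneg _) h1u.le),
        ← ENNReal.ofReal_mul (by positivity)]
      congr 1
      field_simp
    · have h' : ¬ (0 < t * u ∧ t * u < t) := fun hc => h ((cond_iff ht).1 hc)
      simp [W, h, h']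
  calc ENNReal.ofReal t * ∫⁻ u, W α t (t * u) * ENNReal.ofReal ((t * u) ^ c)
      = ENNReal.ofReal t * ∫⁻ u, (ENNReal.ofReal t⁻¹ * ENNReal.ofReal (t ^ c)) *
          (W α 1 u * ENNReal.ofReal (u ^ c)) := by rw [lintegral_congr hpt]
    _ = ENNReal.ofReal t * ((ENNReal.ofReal t⁻¹ * ENNReal.ofReal (t ^ c)) *
          ∫⁻ u, W α 1 u * ENNReal.ofReal (u ^ c)) := by
        rw [lintegral_const_mul' _ _ (by simp [ENNReal.mul_ne_top])]
    _ = (ENNReal.ofReal t * ENNReal.ofReal t⁻¹) * (ENNReal.ofReal (t ^ c) *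
          ∫⁻ u, W α 1 u * ENNReal.ofReal (u ^ c)) := by ring
    _ = ENNReal.ofReal (t ^ c) * ∫⁻ u, W α 1 u * ENNReal.ofReal (u ^ c) := by
        rw [← ENNReal.ofReal_mul ht.le, mul_inv_cancel₀ ht.ne', ENNReal.ofReal_one, one_mul]

lemma cond_iff' {s r : ℝ} (hs : 0 < s) : (0 < s ∧ s < s * r) ↔ 1 < r := by
  constructor
  · rintro ⟨-, h2⟩
    by_contra hr; push_neg at hr
    nlinarith
  · intro hr
    exact ⟨hs, by nlinarith⟩

lemma col_id (α : ℝ) (c : ℝ) {s : ℝ} (hs : 0 < s) :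
    ∫⁻ t, W α t s * ENNReal.ofReal (t ^ c) =
      ENNReal.ofReal (s ^ c) * ∫⁻ r, W α r 1 * ENNReal.ofReal (r ^ c) := by
  have hmeas : Measurable fun t => W α t s * ENNReal.ofReal (t ^ c) :=
    ((W_meas α).comp (measurable_id.prodMk measurable_const)).mul
      ((measurable_id.pow_const c).ennreal_ofReal)
  rw [lint_scale' hmeas hs]
  have hpt : ∀ r, W α (s * r) s * ENNReal.ofReal ((s * r) ^ c)
      = (ENNReal.ofReal s⁻¹ * ENNReal.ofReal (s ^ c)) *
        (W α r 1 * ENNReal.ofReal (r ^ c)) := by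
    intro r
    by_cases h : 1 < r
    · have h1r : (0:ℝ) < r - 1 := by linarith
      have hr0 : (0:ℝ) < r := by linarith
      have h1 : W α (s * r) s = ENNReal.ofReal (|r ^ α - 1| / (s * (r - 1))) := by
        rw [W, if_pos ((cond_iff' hs).2 h)]
        rw [show s * r / s = r by rw [mul_comm, mul_div_assoc, div_self hs.ne', mul_one],
          show s * r - s = s * (r - 1) by ring]
      have h2 : W α r 1 = ENNReal.ofReal (|r ^ α - 1| / (r - 1)) := by
        rw [W, if_pos ⟨one_pos, h⟩, div_one]
      rw [h1, h2, Real.mul_rpow hs.le hr0.le,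
        ← ENNReal.ofReal_mul (div_nonneg (abs_nonneg _) (by nlinarith)),
        ← ENNReal.ofReal_mul (inv_nonneg.2 hs.le),
        ← ENNReal.ofReal_mul (div_nonneg (abs_nonneg _) h1r.le),
        ← ENNReal.ofReal_mul (by positivity)]
      congr 1
      field_simp
    · have h' : ¬ (0 < s ∧ s < s * r) := fun hc => h ((cond_iff' hs).1 hc)
      have h'' : ¬ ((0:ℝ) < 1 ∧ 1 < r) := fun hc => h hc.2
      simp [W, h', h'', h]
  calc ENNReal.ofReal s * ∫⁻ r, W α (s * r) s * ENNReal.ofReal ((s * r) ^ c)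
      = ENNReal.ofReal s * ∫⁻ r, (ENNReal.ofReal s⁻¹ * ENNReal.ofReal (s ^ c)) *
          (W α r 1 * ENNReal.ofReal (r ^ c)) := by rw [lintegral_congr hpt]
    _ = ENNReal.ofReal s * ((ENNReal.ofReal s⁻¹ * ENNReal.ofReal (s ^ c)) *
          ∫⁻ r, W α r 1 * ENNReal.ofReal (r ^ c)) := by
        rw [lintegral_const_mul' _ _ (by simp [ENNReal.mul_ne_top])]
    _ = (ENNReal.ofReal s * ENNReal.ofReal s⁻¹) * (ENNReal.ofReal (s ^ c) *
          ∫⁻ r, W α r 1 * ENNReal.ofReal (r ^ c)) := by ring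
    _ = ENNReal.ofReal (s ^ c) * ∫⁻ r, W α r 1 * ENNReal.ofReal (r ^ c) := by
        rw [← ENNReal.ofReal_mul hs.le, mul_inv_cancel₀ hs.ne', ENNReal.ofReal_one, one_mul]

lemma exp_abs_bound (a : ℝ) : |Real.exp a - 1| ≤ |a| * Real.exp |a| := by
  rcases le_or_gt 0 a with ha | ha
  · rw [abs_of_nonneg ha, abs_of_nonneg (by linarith [Real.one_le_exp ha])]
    have h := Real.add_one_le_exp (-a)
    have h2 : Real.exp (-a) * Real.exp a = 1 := by
      rw [← Real.exp_add]; simp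
    nlinarith [Real.exp_pos a]
  · rw [abs_of_neg ha, abs_of_nonpos (by linarith [Real.exp_lt_one_iff.2 ha] : Real.exp a - 1 ≤ 0)]
    have h := Real.add_one_le_exp a
    nlinarith [Real.one_le_exp (by linarith : (0:ℝ) ≤ -a)]

lemma key_ratio {x : ℝ} (hx : 1/2 ≤ x) (hx2 : x ≤ 2) :
    |x ^ α - 1| ≤ |α| * 2 ^ |α| * (2 * |x - 1|) := by
  have hx0 : (0:ℝ) < x := by linarith
  have hlog : |Real.log x| ≤ 2 * |x - 1| := by
    rcases le_or_gt 1 x with h1 | h1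
    · rw [abs_of_nonneg (Real.log_nonneg h1), abs_of_nonneg (by linarith)]
      have := Real.log_le_sub_one_of_pos hx0
      linarith
    · rw [abs_of_nonpos (Real.log_nonpos hx0.le h1.le), abs_of_neg (by linarith)]
      have h2 : Real.log x⁻¹ ≤ x⁻¹ - 1 := Real.log_le_sub_one_of_pos (by positivity)
      rw [Real.log_inv] at h2
      have h3 : x⁻¹ - 1 = (1 - x) / x := by field_simp
      have h4 : (1 - x) / x ≤ 2 * (1 - x) := by
        rw [div_le_iff₀ hx0]; nlinarith
      linarith
  have hlog2 : |Real.log x| ≤ Real.log 2 := by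
    rcases le_or_gt 1 x with h1 | h1
    · rw [abs_of_nonneg (Real.log_nonneg h1)]
      exact Real.log_le_log (by linarith) hx2
    · rw [abs_of_nonpos (Real.log_nonpos hx0.le h1.le), ← Real.log_inv]
      have hinv : x⁻¹ ≤ 2 := by rw [← one_div, div_le_iff₀ hx0]; linarith
      exact Real.log_le_log (by positivity) hinv
  have hxα : x ^ α = Real.exp (Real.log x * α) := by
    rw [Real.rpow_def_of_pos hx0]
  have hea : Real.exp |Real.log x * α| ≤ 2 ^ |α| := by
    rw [Real.rpow_def_of_pos two_pos]
    apply Real.exp_le_exp.2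
    rw [abs_mul]
    calc |Real.log x| * |α| ≤ Real.log 2 * |α| :=
          mul_le_mul_of_nonneg_right hlog2 (abs_nonneg _)
      _ = Real.log 2 * |α| := rfl
  have h1 := exp_abs_bound (Real.log x * α)
  rw [← hxα] at h1
  calc |x ^ α - 1| ≤ |Real.log x * α| * Real.exp |Real.log x * α| := h1
    _ ≤ (2 * |x - 1| * |α|) * 2 ^ |α| := by
        apply mul_le_mul _ hea (Real.exp_pos _).le (by positivity)
        rw [abs_mul]
        exact mul_le_mul_of_nonneg_right hlog (abs_nonneg _)
    _ = |α| * 2 ^ |α| * (2 * |x - 1|) := by ring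

lemma C1_raw_lt_top (hp : 1 < p) (hα : α < 1 - 1/p) :
    ∫⁻ u, W α 1 u * ENNReal.ofReal (u ^ (-(1/p))) < ⊤ := by
  set β := max α 0 with hβdef
  have hβ0 : 0 ≤ β := le_max_right α 0
  have hβα : α ≤ β := le_max_left α 0
  have hp0 : 0 < p := by linarith
  have hβlt : β < 1 - 1/p := by
    have h1p : 0 < 1 - 1/p := by
      have : 1/p < 1 := by rw [div_lt_one hp0]; linarith
      linarith
    exact max_lt hα h1p
  set D : ℝ := 8 * (|α| + 1) * 2 ^ |α| with hDdef
  have hD0 : 0 ≤ D := by positivity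
  set g₁ : ℝ → ℝ := (Ioo (0:ℝ) 1).indicator (fun u => 4 * u ^ (-(β + 1/p)) + D) with hg₁
  have hexp : (-1:ℝ) < -(β + 1/p) := by
    have : β + 1/p < 1 := by linarith
    linarith
  have h1 : IntegrableOn (fun u : ℝ => u ^ (-(β + 1/p))) (Ioo 0 1) :=
    (((intervalIntegral.intervalIntegrable_rpow' hexp (a := 0) (b := 1)).1).mono_set
      Ioo_subset_Ioc_self)
  have h2 : IntegrableOn (fun _ : ℝ => D) (Ioo (0:ℝ) 1) :=
    integrableOn_const measure_Ioo_lt_top.ne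
  have hint : Integrable g₁ :=
    (integrable_indicator_iff measurableSet_Ioo).2 ((h1.const_mul 4).add h2)
  have B : ∀ u, W α 1 u * ENNReal.ofReal (u ^ (-(1/p))) ≤ ENNReal.ofReal (g₁ u) := by
    intro u
    by_cases h : 0 < u ∧ u < 1
    · obtain ⟨hu0, hu1⟩ := h
      have h1u : (0:ℝ) < 1 - u := by linarith
      rw [hg₁, indicator_of_mem (mem_Ioo.2 ⟨hu0, hu1⟩)]
      rw [W, if_pos ⟨hu0, hu1⟩, show (1:ℝ) - u = 1 - u from rfl,
        ← ENNReal.ofReal_mul (div_nonneg (abs_nonneg _) h1u.le)]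
      apply ENNReal.ofReal_le_ofReal
      have hβpos : (0:ℝ) < u ^ (-β) := Real.rpow_pos_of_pos hu0 _
      have hppos : (0:ℝ) < u ^ (-(1/p)) := Real.rpow_pos_of_pos hu0 _
      have hιβ : (1/u) ^ β = u ^ (-β) := by
        rw [one_div, Real.inv_rpow hu0.le, ← Real.rpow_neg hu0.le]
      rcases le_or_gt u (1/2) with hu2 | hu2
      · -- small u
        have ha1 : (1/u) ^ α ≤ (1/u) ^ β :=
          Real.rpow_le_rpow_of_exponent_le (by rw [le_div_iff₀ hu0]; linarith) hβα
        have ha2 : (1:ℝ) ≤ (1/u) ^ β := by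
          calc (1:ℝ) = 1 ^ β := (Real.one_rpow β).symm
            _ ≤ (1/u) ^ β :=
              Real.rpow_le_rpow zero_le_one (by rw [le_div_iff₀ hu0]; linarith) hβ0
        have ha3 : (0:ℝ) < (1/u) ^ α := Real.rpow_pos_of_pos (by positivity) α
        have hA : |(1/u) ^ α - 1| ≤ 2 * u ^ (-β) := by
          rw [← hιβ, abs_le]; constructor <;> nlinarith
        have e1 : |(1/u) ^ α - 1| / (1 - u) ≤ 4 * u ^ (-β) := by
          rw [div_le_iff₀ h1u]
          nlinarith [mul_nonneg (by linarith : (0:ℝ) ≤ 1 - 2*u) hβpos.le]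
        have e2 : |(1/u) ^ α - 1| / (1 - u) * u ^ (-(1/p)) ≤ 4 * u ^ (-β) * u ^ (-(1/p)) :=
          mul_le_mul_of_nonneg_right e1 hppos.le
        have e3 : u ^ (-β) * u ^ (-(1/p)) = u ^ (-(β + 1/p)) := by
          rw [show -(β + 1/p) = -β + -(1/p) by ring, Real.rpow_add hu0]
        nlinarith [e2, e3]
      · -- u near 1
        have hx : (1:ℝ)/2 ≤ 1/u := by
          rw [div_le_div_iff₀ (by norm_num) hu0]; linarith
        have hx2 : (1:ℝ)/u ≤ 2 := by
          rw [div_le_iff₀ hu0]; linarith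
        have hk := key_ratio (α := α) hx hx2
        have habs : |1/u - 1| = (1 - u)/u := by
          rw [show (1:ℝ)/u - 1 = (1 - u)/u by field_simp, abs_of_nonneg (by positivity)]
        have hd : (1 - u)/u ≤ 2 * (1 - u) := by
          rw [div_le_iff₀ hu0]; nlinarith
        have e1 : |(1/u) ^ α - 1| / (1 - u) ≤ 4 * (|α| * 2 ^ |α|) := by
          rw [div_le_iff₀ h1u]
          rw [habs] at hk
          have hc : |α| * 2 ^ |α| * (2 * ((1 - u)/u)) ≤ |α| * 2 ^ |α| * (2 * (2 * (1 - u))) :=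
            mul_le_mul_of_nonneg_left (by linarith) (by positivity)
          calc |(1/u) ^ α - 1| ≤ |α| * 2 ^ |α| * (2 * ((1 - u)/u)) := hk
            _ ≤ |α| * 2 ^ |α| * (2 * (2 * (1 - u))) := hc
            _ = 4 * (|α| * 2 ^ |α|) * (1 - u) := by ring
        have e2 : u ^ (-(1/p)) ≤ 2 := by
          have h' : u ^ (-(1/p)) = (1/u) ^ (1/p) := by
            rw [one_div u, Real.inv_rpow hu0.le, ← Real.rpow_neg hu0.le]
          rw [h']
          calc (1/u) ^ (1/p) ≤ 2 ^ (1/p) :=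
                Real.rpow_le_rpow (by positivity) hx2 (by positivity)
            _ ≤ 2 ^ (1:ℝ) := Real.rpow_le_rpow_of_exponent_le one_le_two
                (by rw [div_le_one hp0]; linarith)
            _ = 2 := Real.rpow_one 2
        have e3 : |(1/u) ^ α - 1| / (1 - u) * u ^ (-(1/p)) ≤ 4 * (|α| * 2 ^ |α|) * 2 := by
          apply mul_le_mul e1 e2 hppos.le (by positivity)
        have e4 : (0:ℝ) ≤ 4 * u ^ (-(β + 1/p)) := by positivity
        have e5 : 4 * (|α| * 2 ^ |α|) * 2 ≤ D := by
          rw [hDdef]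
          nlinarith [Real.rpow_nonneg (by norm_num : (0:ℝ) ≤ 2) |α|]
        linarith
    · simp only [W, if_neg h, zero_mul]
      exact zero_le
  calc ∫⁻ u, W α 1 u * ENNReal.ofReal (u ^ (-(1/p)))
      ≤ ∫⁻ u, ENNReal.ofReal (g₁ u) := lintegral_mono B
    _ ≤ ∫⁻ u, (‖g₁ u‖₊ : ℝ≥0∞) := lintegral_mono fun u => by
        rw [← enorm_eq_nnnorm, ← ofReal_norm_eq_enorm, Real.norm_eq_abs]
        exact ENNReal.ofReal_le_ofReal (le_abs_self _)
    _ < ⊤ := hint.2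
lemma C2_raw_lt_top (hp : 1 < p) (hpq : p.HolderConjugate q) (hα : α < 1 - 1/p) :
    ∫⁻ r, W α r 1 * ENNReal.ofReal (r ^ (-(1/q))) < ⊤ := by
  set β := max α 0 with hβdef
  have hβ0 : 0 ≤ β := le_max_right α 0
  have hβα : α ≤ β := le_max_left α 0
  have hp0 : 0 < p := by linarith
  have hq0 : 0 < q := hpq.symm.pos
  have h1q : 1/q = 1 - 1/p := by
    have := hpq.inv_add_inv_eq_one
    rw [one_div, one_div]; linarith
  have hβlt : β < 1/q := by
    rw [h1q]
    refine max_lt hα ?_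
    have : 1/p < 1 := by rw [div_lt_one hp0]; linarith
    linarith
  set D : ℝ := 8 * (|α| + 1) * 2 ^ |α| with hDdef
  have hD0 : 0 ≤ D := by positivity
  set g₂ : ℝ → ℝ := (Ioi (1:ℝ)).indicator
    (fun r => 4 * r ^ (β - 1 - 1/q) + D * (Ioo (1:ℝ) 2).indicator (fun _ => (1:ℝ)) r) with hg₂
  have hexp : β - 1 - 1/q < -1 := by linarith
  have h1 : IntegrableOn (fun r : ℝ => r ^ (β - 1 - 1/q)) (Ioi 1) :=
    integrableOn_Ioi_rpow_of_lt hexp one_pos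
  have h2 : Integrable ((Ioo (1:ℝ) 2).indicator (fun _ => (1:ℝ))) :=
    (integrable_indicator_iff measurableSet_Ioo).2
      (integrableOn_const measure_Ioo_lt_top.ne)
  have hint : Integrable g₂ :=
    (integrable_indicator_iff measurableSet_Ioi).2
      ((h1.const_mul 4).add ((h2.const_mul D).integrableOn))
  have B : ∀ r, W α r 1 * ENNReal.ofReal (r ^ (-(1/q))) ≤ ENNReal.ofReal (g₂ r) := by
    intro r
    by_cases h : 1 < r
    · have hr0 : (0:ℝ) < r := by linarith
      have h1r : (0:ℝ) < r - 1 := by linarith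
      rw [hg₂, indicator_of_mem (mem_Ioi.2 h), W, if_pos ⟨one_pos, h⟩, div_one,
        ← ENNReal.ofReal_mul (div_nonneg (abs_nonneg _) h1r.le)]
      apply ENNReal.ofReal_le_ofReal
      have hqpos : (0:ℝ) < r ^ (-(1/q)) := Real.rpow_pos_of_pos hr0 _
      rcases lt_or_ge r 2 with hr2 | hr2
      · -- 1 < r < 2
        rw [indicator_of_mem (mem_Ioo.2 ⟨h, hr2⟩)]
        have hk := key_ratio (α := α) (x := r) (by linarith) hr2.le
        rw [abs_of_nonneg (by linarith : (0:ℝ) ≤ r - 1)] at hk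
        have e1 : |r ^ α - 1| / (r - 1) ≤ 2 * (|α| * 2 ^ |α|) := by
          rw [div_le_iff₀ h1r]
          calc |r ^ α - 1| ≤ |α| * 2 ^ |α| * (2 * (r - 1)) := hk
            _ = 2 * (|α| * 2 ^ |α|) * (r - 1) := by ring
        have e2 : r ^ (-(1/q)) ≤ 1 :=
          Real.rpow_le_one_of_one_le_of_nonpos h.le (neg_nonpos.2 (by positivity))
        have e3 : |r ^ α - 1| / (r - 1) * r ^ (-(1/q)) ≤ 2 * (|α| * 2 ^ |α|) := by
          calc |r ^ α - 1| / (r - 1) * r ^ (-(1/q)) ≤ (2 * (|α| * 2 ^ |α|)) * 1 :=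
                mul_le_mul e1 e2 hqpos.le (by positivity)
            _ = 2 * (|α| * 2 ^ |α|) := by ring
        have e4 : (0:ℝ) ≤ 4 * r ^ (β - 1 - 1/q) := by positivity
        have e5 : 2 * (|α| * 2 ^ |α|) ≤ D * 1 := by
          rw [hDdef]
          nlinarith [Real.rpow_nonneg (by norm_num : (0:ℝ) ≤ 2) |α|]
        linarith
      · -- 2 ≤ r
        rw [indicator_of_notMem (by simp [mem_Ioo]; intro; linarith)]
        have ha1 : r ^ α ≤ r ^ β := Real.rpow_le_rpow_of_exponent_le h.le hβα
        have ha2 : (1:ℝ) ≤ r ^ β := by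
          calc (1:ℝ) = 1 ^ β := (Real.one_rpow β).symm
            _ ≤ r ^ β := Real.rpow_le_rpow zero_le_one h.le hβ0
        have ha3 : (0:ℝ) < r ^ α := Real.rpow_pos_of_pos hr0 α
        have hβpos : (0:ℝ) < r ^ β := Real.rpow_pos_of_pos hr0 β
        have hA : |r ^ α - 1| ≤ 2 * r ^ β := by
          rw [abs_le]; constructor <;> nlinarith
        have e1 : |r ^ α - 1| / (r - 1) ≤ 4 * r ^ β * r⁻¹ := by
          rw [div_le_iff₀ h1r]
          have key : 4 * r ^ β * r⁻¹ * (r - 1) - 2 * r ^ β = 2 * r ^ β * r⁻¹ * (r - 2) := by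
            field_simp
            ring
          have key2 : (0:ℝ) ≤ 2 * r ^ β * r⁻¹ * (r - 2) :=
            mul_nonneg (by positivity) (by linarith)
          linarith
        have e2 : |r ^ α - 1| / (r - 1) * r ^ (-(1/q)) ≤ 4 * r ^ β * r⁻¹ * r ^ (-(1/q)) :=
          mul_le_mul_of_nonneg_right e1 hqpos.le
        have e3 : r ^ β * r⁻¹ * r ^ (-(1/q)) = r ^ (β - 1 - 1/q) := by
          rw [show β - 1 - 1/q = β + ((-1 : ℝ) + -(1/q)) by ring, Real.rpow_add hr0,
            Real.rpow_add hr0, Real.rpow_neg_one]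
          ring
        have : 4 * r ^ β * r⁻¹ * r ^ (-(1/q)) = 4 * r ^ (β - 1 - 1/q) := by
          rw [← e3]; ring
        rw [this] at e2
        have hind : (0:ℝ) ≤ D * (Ioo (1:ℝ) 2).indicator (fun _ => (1:ℝ)) r :=
          mul_nonneg hD0 (indicator_nonneg (fun _ _ => zero_le_one) r)
        linarith
    · have h' : ¬ ((0:ℝ) < 1 ∧ 1 < r) := fun hc => h hc.2
      simp only [W, if_neg h', zero_mul]
      exact zero_le
  calc ∫⁻ r, W α r 1 * ENNReal.ofReal (r ^ (-(1/q)))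
      ≤ ∫⁻ r, ENNReal.ofReal (g₂ r) := lintegral_mono B
    _ ≤ ∫⁻ r, (‖g₂ r‖₊ : ℝ≥0∞) := lintegral_mono fun r => by
        rw [← enorm_eq_nnnorm, ← ofReal_norm_eq_enorm, Real.norm_eq_abs]
        exact ENNReal.ofReal_le_ofReal (le_abs_self _)
    _ < ⊤ := hint.2

lemma W_pos_cond {α t s : ℝ} (h : W α t s ≠ 0) : 0 < s ∧ s < t := by
  by_contra hc; exact h (by simp [W, hc])

/-- abbreviations -/
noncomputable def C1 (α p : ℝ) : ℝ≥0∞ := ∫⁻ u, W α 1 u * ENNReal.ofReal (u ^ (-(1/p)))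

lemma holder_step (hpq : p.HolderConjugate q) {F : ℝ → ℝ≥0∞} (hF : Measurable F)
    {t : ℝ} (ht : 0 < t) :
    ∫⁻ s, W α t s * F s ≤
      ((∫⁻ s, W α t s * ENNReal.ofReal (s ^ (1/q)) * F s ^ p) ^ (1/p)) *
      ((ENNReal.ofReal (t ^ (-(1/p))) * C1 α p) ^ (1/q)) := by
  have hp0 : 0 < p := hpq.pos
  have hq0 : 0 < q := hpq.symm.pos
  set A : ℝ → ℝ≥0∞ := fun s => (W α t s) ^ (1/q) * ENNReal.ofReal (s ^ (-(1/(p*q)))) with hA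
  set B : ℝ → ℝ≥0∞ := fun s => (W α t s) ^ (1/p) * ENNReal.ofReal (s ^ (1/(p*q))) * F s with hB
  have hmA : Measurable A :=
    ((W_meas_left α t).pow_const _).mul ((measurable_id.pow_const _).ennreal_ofReal)
  have hmB : Measurable B :=
    (((W_meas_left α t).pow_const _).mul
      ((measurable_id.pow_const _).ennreal_ofReal)).mul hF
  have step1 : ∀ s, W α t s * F s ≤ (B * A) s := by
    intro s
    rcases eq_or_ne (W α t s) 0 with h0 | h0
    · simp [hA, hB, h0, ENNReal.zero_rpow_of_pos (by positivity : (0:ℝ) < 1/q),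
        ENNReal.zero_rpow_of_pos (by positivity : (0:ℝ) < 1/p)]
    · obtain ⟨hs0, hst⟩ := W_pos_cond h0
      have hWW : (W α t s) ^ (1/p) * (W α t s) ^ (1/q) = W α t s := by
        rw [← ENNReal.rpow_add _ _ h0 (W_ne_top α t s)]
        rw [show 1/p + 1/q = 1 by rw [one_div, one_div]; exact hpq.inv_add_inv_eq_one]
        exact ENNReal.rpow_one _
      have hww : ENNReal.ofReal (s ^ (1/(p*q))) * ENNReal.ofReal (s ^ (-(1/(p*q)))) = 1 := by
        rw [← ENNReal.ofReal_mul (by positivity), ← Real.rpow_add hs0]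
        simp
      apply le_of_eq
      calc W α t s * F s = ((W α t s) ^ (1/p) * (W α t s) ^ (1/q)) *
            ((ENNReal.ofReal (s ^ (1/(p*q))) * ENNReal.ofReal (s ^ (-(1/(p*q))))) * F s) := by
            rw [hWW, hww, one_mul]
        _ = (B * A) s := by simp only [hA, hB, Pi.mul_apply]; ring
  have step2 := ENNReal.lintegral_mul_le_Lp_mul_Lq volume hpq hmB.aemeasurable hmA.aemeasurable
  have step3 : ∫⁻ s, A s ^ q = ENNReal.ofReal (t ^ (-(1/p))) * C1 α p := by
    rw [C1, ← row_id α (-(1/p)) ht]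
    apply lintegral_congr
    intro s
    rcases eq_or_ne (W α t s) 0 with h0 | h0
    · have hA0 : A s = 0 := by
        simp [hA, h0, ENNReal.zero_rpow_of_pos (show (0:ℝ) < 1/q by positivity), hq0, hp0]
      rw [hA0, h0, ENNReal.zero_rpow_of_pos hq0, zero_mul]
    · obtain ⟨hs0, -⟩ := W_pos_cond h0
      rw [hA]
      simp only
      rw [ENNReal.mul_rpow_of_nonneg _ _ hq0.le, ← ENNReal.rpow_mul,
        one_div_mul_cancel hq0.ne', ENNReal.rpow_one,
        ENNReal.ofReal_rpow_of_pos (Real.rpow_pos_of_pos hs0 _),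
        ← Real.rpow_mul hs0.le, show -(1/(p*q)) * q = -(1/p) by rw [neg_mul, neg_inj, div_mul_eq_mul_div, one_mul, mul_comm p q, ← div_div, div_self hq0.ne']]
  have step4 : ∫⁻ s, B s ^ p = ∫⁻ s, W α t s * ENNReal.ofReal (s ^ (1/q)) * F s ^ p := by
    apply lintegral_congr
    intro s
    rcases eq_or_ne (W α t s) 0 with h0 | h0
    · have hB0 : B s = 0 := by
        simp [hB, h0, ENNReal.zero_rpow_of_pos (show (0:ℝ) < 1/p by positivity), hq0, hp0]
      rw [hB0, h0, ENNReal.zero_rpow_of_pos hp0, zero_mul, zero_mul]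
    · obtain ⟨hs0, -⟩ := W_pos_cond h0
      rw [hB]
      simp only
      rw [ENNReal.mul_rpow_of_nonneg _ _ hp0.le, ENNReal.mul_rpow_of_nonneg _ _ hp0.le,
        ← ENNReal.rpow_mul, one_div_mul_cancel hp0.ne', ENNReal.rpow_one,
        ENNReal.ofReal_rpow_of_pos (Real.rpow_pos_of_pos hs0 _),
        ← Real.rpow_mul hs0.le, show 1/(p*q) * p = 1/q by field_simp [hp0.ne', hq0.ne']]
  calc ∫⁻ s, W α t s * F s ≤ ∫⁻ s, (B * A) s := lintegral_mono step1
    _ ≤ (∫⁻ s, B s ^ p) ^ (1/p) * (∫⁻ s, A s ^ q) ^ (1/q) := step2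
    _ = _ := by rw [step3, step4]
noncomputable def C2 (α q : ℝ) : ℝ≥0∞ := ∫⁻ r, W α r 1 * ENNReal.ofReal (r ^ (-(1/q)))


lemma C1_lt_top (hp : 1 < p) (hα : α < 1 - 1/p) : C1 α p < ⊤ :=
  C1_raw_lt_top hp hα

lemma C2_lt_top (hp : 1 < p) (hpq : p.HolderConjugate q) (hα : α < 1 - 1/p) : C2 α q < ⊤ :=
  C2_raw_lt_top hp hpq hα

lemma schur (hp : 1 < p) (hpq : p.HolderConjugate q) (hα : α < 1 - 1/p)
    {F : ℝ → ℝ≥0∞} (hF : Measurable F) (hFt : ∀ s, F s ≠ ⊤) :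
    ∫⁻ t in Ioi (0:ℝ), (∫⁻ s, W α t s * F s) ^ p ≤
      (C1 α p) ^ (p/q) * C2 α q * ∫⁻ s in Ioi (0:ℝ), F s ^ p := by
  have hp0 : 0 < p := hpq.pos
  have hq0 : 0 < q := hpq.symm.pos
  have hC1top : C1 α p ≠ ⊤ := (C1_lt_top hp hα).ne
  have hC2top : C2 α q ≠ ⊤ := (C2_lt_top hp hpq hα).ne
  set h : ℝ → ℝ≥0∞ := fun t => ∫⁻ s, W α t s * ENNReal.ofReal (s ^ (1/q)) * F s ^ p with hh
  have key : ∀ t ∈ Ioi (0:ℝ), (∫⁻ s, W α t s * F s) ^ p ≤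
      C1 α p ^ (p/q) * (ENNReal.ofReal (t ^ (-(1/q))) * h t) := by
    intro t ht
    rw [mem_Ioi] at ht
    have h1 := holder_step (α := α) hpq hF ht
    calc (∫⁻ s, W α t s * F s) ^ p
        ≤ ((h t) ^ (1/p) * ((ENNReal.ofReal (t ^ (-(1/p))) * C1 α p) ^ (1/q))) ^ p :=
          ENNReal.rpow_le_rpow h1 hp0.le
      _ = C1 α p ^ (p/q) * (ENNReal.ofReal (t ^ (-(1/q))) * h t) := by
          rw [ENNReal.mul_rpow_of_nonneg _ _ hp0.le, ← ENNReal.rpow_mul, ← ENNReal.rpow_mul,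
            one_div_mul_cancel hp0.ne', ENNReal.rpow_one,
            show (1/q) * p = p/q by ring,
            ENNReal.mul_rpow_of_nonneg _ _ (by positivity : (0:ℝ) ≤ p/q),
            ENNReal.ofReal_rpow_of_pos (Real.rpow_pos_of_pos ht _),
            ← Real.rpow_mul ht.le,
            show -(1/p) * (p/q) = -(1/q) by field_simp [hp0.ne', hq0.ne']]
          ring
  have hmeasΦ : Measurable (fun z : ℝ × ℝ =>
      ENNReal.ofReal (z.1 ^ (-(1/q))) *
        (W α z.1 z.2 * ENNReal.ofReal (z.2 ^ (1/q)) * F z.2 ^ p)) :=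
    ((measurable_fst.pow_const _).ennreal_ofReal).mul
      (((W_meas α).mul ((measurable_snd.pow_const _).ennreal_ofReal)).mul
        ((hF.comp measurable_snd).pow_const _))
  have swap_eval : ∫⁻ t, ENNReal.ofReal (t ^ (-(1/q))) * h t =
      C2 α q * ∫⁻ s in Ioi (0:ℝ), F s ^ p := by
    calc ∫⁻ t, ENNReal.ofReal (t ^ (-(1/q))) * h t
        = ∫⁻ t, ∫⁻ s, ENNReal.ofReal (t ^ (-(1/q))) *
            (W α t s * ENNReal.ofReal (s ^ (1/q)) * F s ^ p) := by
          apply lintegral_congr; intro t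
          rw [hh]
          exact (lintegral_const_mul' _ _ ENNReal.ofReal_ne_top).symm
      _ = ∫⁻ s, ∫⁻ t, ENNReal.ofReal (t ^ (-(1/q))) *
            (W α t s * ENNReal.ofReal (s ^ (1/q)) * F s ^ p) :=
          lintegral_lintegral_swap hmeasΦ.aemeasurable
      _ = ∫⁻ s, (Ioi (0:ℝ)).indicator (fun s => C2 α q * F s ^ p) s := by
          apply lintegral_congr; intro s
          rcases lt_or_ge 0 s with hs | hs
          · rw [indicator_of_mem (mem_Ioi.2 hs)]
            have hrearr : ∀ t : ℝ, ENNReal.ofReal (t ^ (-(1/q))) *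
                (W α t s * ENNReal.ofReal (s ^ (1/q)) * F s ^ p) =
                (ENNReal.ofReal (s ^ (1/q)) * F s ^ p) *
                  (W α t s * ENNReal.ofReal (t ^ (-(1/q)))) := fun t => by ring
            rw [lintegral_congr hrearr,
              lintegral_const_mul' _ _ (ENNReal.mul_ne_top ENNReal.ofReal_ne_top
                (ENNReal.rpow_ne_top_of_nonneg hp0.le (hFt s))),
              col_id α (-(1/q)) hs]
            rw [show (ENNReal.ofReal (s ^ (1/q)) * F s ^ p) *
                (ENNReal.ofReal (s ^ (-(1/q))) * ∫⁻ r, W α r 1 * ENNReal.ofReal (r ^ (-(1/q)))) =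
                (ENNReal.ofReal (s ^ (1/q)) * ENNReal.ofReal (s ^ (-(1/q)))) *
                  ((∫⁻ r, W α r 1 * ENNReal.ofReal (r ^ (-(1/q)))) * F s ^ p) by ring,
              ← ENNReal.ofReal_mul (by positivity), ← Real.rpow_add hs]
            simp [C2]
          · rw [indicator_of_notMem (by simpa using hs)]
            have hz : ∀ t : ℝ, ENNReal.ofReal (t ^ (-(1/q))) *
                (W α t s * ENNReal.ofReal (s ^ (1/q)) * F s ^ p) = 0 := by
              intro t
              have : W α t s = 0 :=
                if_neg (fun hc => absurd hc.1 (not_lt.2 hs))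
              rw [this]; ring
            rw [lintegral_congr hz, lintegral_zero]
      _ = ∫⁻ s in Ioi (0:ℝ), C2 α q * F s ^ p := lintegral_indicator measurableSet_Ioi _
      _ = C2 α q * ∫⁻ s in Ioi (0:ℝ), F s ^ p := lintegral_const_mul' _ _ hC2top
  calc ∫⁻ t in Ioi (0:ℝ), (∫⁻ s, W α t s * F s) ^ p
      ≤ ∫⁻ t in Ioi (0:ℝ), C1 α p ^ (p/q) * (ENNReal.ofReal (t ^ (-(1/q))) * h t) :=
        lintegral_mono_ae ((ae_restrict_iff' measurableSet_Ioi).2 (ae_of_all _ key))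
    _ = C1 α p ^ (p/q) * ∫⁻ t in Ioi (0:ℝ), ENNReal.ofReal (t ^ (-(1/q))) * h t :=
        lintegral_const_mul' _ _ (ENNReal.rpow_ne_top_of_nonneg (by positivity) hC1top)
    _ ≤ C1 α p ^ (p/q) * ∫⁻ t, ENNReal.ofReal (t ^ (-(1/q))) * h t :=
        mul_le_mul_right (setLIntegral_le_lintegral _ _) _
    _ = C1 α p ^ (p/q) * (C2 α q * ∫⁻ s in Ioi (0:ℝ), F s ^ p) := by rw [swap_eval]
    _ = (C1 α p) ^ (p/q) * C2 α q * ∫⁻ s in Ioi (0:ℝ), F s ^ p := by ring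
end Stmt6Aux

open Stmt6Aux

/-- (scalar Prüss–Simonett estimate) Let `p ∈ (1,∞)`, `α < 1 - 1/p`.
There is a constant `c = c(p,α)` such that for every continuous `K : (0,∞) → ℂ` with
`|K(t)| ≤ M/t`, the operator `(Tf)(t) = ∫_0^t K(t-s)[(t/s)^α - 1] f(s) ds` is
bounded on `L^p(0,∞)` with norm at most `c·M`. -/
theorem stmt6 (p α : ℝ) (hp : 1 < p) (hα : α < 1 - 1 / p) :
    ∃ c : ℝ, 0 ≤ c ∧
      ∀ (K : ℝ → ℂ) (M : ℝ), 0 ≤ M → ContinuousOn K (Ioi 0) →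
        (∀ t : ℝ, 0 < t → ‖K t‖ ≤ M / t) →
        ∀ f : ℝ → ℂ, Measurable f → IntegrableOn (fun s => ‖f s‖ ^ p) (Ioi 0) →
          (∫ t in Ioi (0:ℝ),
              ‖∫ s in Ioo 0 t, ((t / s) ^ α - 1 : ℝ) • (K (t - s) * f s)‖ ^ p) ^ (1/p)
            ≤ c * M * (∫ s in Ioi (0:ℝ), ‖f s‖ ^ p) ^ (1/p) := by
  have hp0 : 0 < p := by linarith
  set q : ℝ := p / (p - 1) with hqdef
  have hp1 : p - 1 ≠ 0 := by intro h; nlinarith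
  have hpq : p.HolderConjugate q := (Real.holderConjugate_iff_eq_conjExponent hp).2 hqdef
  have hq0 : 0 < q := hpq.symm.pos
  have hC1top : C1 α p ≠ ⊤ := (C1_lt_top hp hα).ne
  have hC2top : C2 α q ≠ ⊤ := (C2_lt_top hp hpq hα).ne
  refine ⟨((C1 α p ^ (p/q) * C2 α q).toReal) ^ (1/p), by positivity, ?_⟩
  intro K M hM hKc hK f hf hfi
  set F : ℝ → ℝ≥0∞ := fun s => (‖f s‖₊ : ℝ≥0∞) with hF'
  have hF : Measurable F := hf.enorm
  have hFt : ∀ s, F s ≠ ⊤ := fun s => ENNReal.coe_ne_top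
  set R : ℝ := ∫ s in Ioi (0:ℝ), ‖f s‖ ^ p with hR
  have hR0 : 0 ≤ R := integral_nonneg fun s => by positivity
  have hN : ∫⁻ s in Ioi (0:ℝ), F s ^ p = ENNReal.ofReal R := by
    rw [hR, ofReal_integral_eq_lintegral_ofReal hfi (ae_of_all _ fun s => by positivity)]
    apply lintegral_congr
    intro s
    rw [← ENNReal.ofReal_rpow_of_nonneg (norm_nonneg _) hp0.le, ofReal_norm_eq_enorm, enorm_eq_nnnorm]
  set Tf : ℝ → ℂ := fun t => ∫ s in Ioo 0 t, ((t / s) ^ α - 1 : ℝ) • (K (t - s) * f s)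
    with hTf
  have stepA : ∀ t ∈ Ioi (0:ℝ),
      (‖Tf t‖₊ : ℝ≥0∞) ≤ ENNReal.ofReal M * ∫⁻ s, W α t s * F s := by
    intro t ht
    rw [mem_Ioi] at ht
    calc (‖Tf t‖₊ : ℝ≥0∞)
        ≤ ∫⁻ s in Ioo 0 t, ‖((t / s) ^ α - 1 : ℝ) • (K (t - s) * f s)‖₊ :=
          enorm_integral_le_lintegral_enorm _
      _ ≤ ∫⁻ s in Ioo 0 t, ENNReal.ofReal M * (W α t s * F s) := by
          refine lintegral_mono_ae ((ae_restrict_iff' measurableSet_Ioo).2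
            (ae_of_all _ fun s hs => ?_))
          rw [mem_Ioo] at hs
          have hts : 0 < t - s := by linarith [hs.2]
          have heq : ((‖((t / s) ^ α - 1 : ℝ) • (K (t - s) * f s)‖₊ : ℝ≥0∞)) =
              ENNReal.ofReal (|(t / s) ^ α - 1|) * ((‖K (t - s)‖₊ : ℝ≥0∞) * F s) := by
            rw [nnnorm_smul, nnnorm_mul]
            push_cast
            rw [← enorm_eq_nnnorm ((t / s) ^ α - 1 : ℝ), ← ofReal_norm_eq_enorm ((t / s) ^ α - 1 : ℝ), Real.norm_eq_abs]
          rw [heq]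
          have hKb : ((‖K (t - s)‖₊ : ℝ≥0∞)) ≤ ENNReal.ofReal (M / (t - s)) := by
            rw [← enorm_eq_nnnorm, ← ofReal_norm_eq_enorm]
            exact ENNReal.ofReal_le_ofReal (hK _ hts)
          calc ENNReal.ofReal (|(t / s) ^ α - 1|) * ((‖K (t - s)‖₊ : ℝ≥0∞) * F s)
              ≤ ENNReal.ofReal (|(t / s) ^ α - 1|) * (ENNReal.ofReal (M / (t - s)) * F s) :=
                mul_le_mul_right (mul_le_mul_left hKb _) _
            _ = ENNReal.ofReal M * (W α t s * F s) := by
                rw [W, if_pos ⟨hs.1, hs.2⟩, ← mul_assoc, ← mul_assoc,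
                  ← ENNReal.ofReal_mul (abs_nonneg _),
                  ← ENNReal.ofReal_mul hM,
                  show |(t / s) ^ α - 1| * (M / (t - s)) =
                    M * (|(t / s) ^ α - 1| / (t - s)) by ring]
      _ ≤ ∫⁻ s, ENNReal.ofReal M * (W α t s * F s) := setLIntegral_le_lintegral _ _
      _ = ENNReal.ofReal M * ∫⁻ s, W α t s * F s :=
          lintegral_const_mul' _ _ ENNReal.ofReal_ne_top
  by_cases hI : IntegrableOn (fun t => ‖Tf t‖ ^ p) (Ioi 0)
  · have hmain : ∫⁻ t in Ioi (0:ℝ), (‖Tf t‖₊ : ℝ≥0∞) ^ p ≤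
        ENNReal.ofReal M ^ p * (C1 α p ^ (p/q) * C2 α q * ENNReal.ofReal R) := by
      calc ∫⁻ t in Ioi (0:ℝ), (‖Tf t‖₊ : ℝ≥0∞) ^ p
          ≤ ∫⁻ t in Ioi (0:ℝ), (ENNReal.ofReal M * ∫⁻ s, W α t s * F s) ^ p := by
            refine lintegral_mono_ae ((ae_restrict_iff' measurableSet_Ioi).2
              (ae_of_all _ fun t ht => ?_))
            exact ENNReal.rpow_le_rpow (stepA t ht) hp0.le
        _ = ∫⁻ t in Ioi (0:ℝ), ENNReal.ofReal M ^ p * (∫⁻ s, W α t s * F s) ^ p := by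
            apply lintegral_congr
            intro t
            rw [ENNReal.mul_rpow_of_nonneg _ _ hp0.le]
        _ = ENNReal.ofReal M ^ p * ∫⁻ t in Ioi (0:ℝ), (∫⁻ s, W α t s * F s) ^ p :=
            lintegral_const_mul' _ _
              (ENNReal.rpow_ne_top_of_nonneg hp0.le ENNReal.ofReal_ne_top)
        _ ≤ ENNReal.ofReal M ^ p * (C1 α p ^ (p/q) * C2 α q * ∫⁻ s in Ioi (0:ℝ), F s ^ p) :=
            mul_le_mul_right (schur hp hpq hα hF hFt) _
        _ = ENNReal.ofReal M ^ p * (C1 α p ^ (p/q) * C2 α q * ENNReal.ofReal R) := by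
            rw [hN]
    have hfin : ENNReal.ofReal M ^ p * (C1 α p ^ (p/q) * C2 α q * ENNReal.ofReal R) ≠ ⊤ :=
      ENNReal.mul_ne_top (ENNReal.rpow_ne_top_of_nonneg hp0.le ENNReal.ofReal_ne_top)
        (ENNReal.mul_ne_top (ENNReal.mul_ne_top
          (ENNReal.rpow_ne_top_of_nonneg (by positivity) hC1top) hC2top) ENNReal.ofReal_ne_top)
    have hreal : ∫ t in Ioi (0:ℝ), ‖Tf t‖ ^ p ≤
        M ^ p * ((C1 α p ^ (p/q) * C2 α q).toReal * R) := by
      rw [integral_eq_lintegral_of_nonneg_ae (ae_of_all _ fun t => by positivity) hI.1]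
      have hcong : ∫⁻ t in Ioi (0:ℝ), ENNReal.ofReal (‖Tf t‖ ^ p) =
          ∫⁻ t in Ioi (0:ℝ), (‖Tf t‖₊ : ℝ≥0∞) ^ p := by
        apply lintegral_congr
        intro t
        rw [← ENNReal.ofReal_rpow_of_nonneg (norm_nonneg _) hp0.le, ofReal_norm_eq_enorm, enorm_eq_nnnorm]
      rw [hcong]
      calc (∫⁻ t in Ioi (0:ℝ), (‖Tf t‖₊ : ℝ≥0∞) ^ p).toReal
          ≤ (ENNReal.ofReal M ^ p * (C1 α p ^ (p/q) * C2 α q * ENNReal.ofReal R)).toReal :=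
            ENNReal.toReal_mono hfin hmain
        _ = M ^ p * ((C1 α p ^ (p/q) * C2 α q).toReal * R) := by
            rw [ENNReal.toReal_mul, ENNReal.toReal_mul, ENNReal.toReal_ofReal hR0,
              ENNReal.ofReal_rpow_of_nonneg hM hp0.le, ENNReal.toReal_ofReal (by positivity)]
    calc (∫ t in Ioi (0:ℝ), ‖Tf t‖ ^ p) ^ (1/p)
        ≤ (M ^ p * ((C1 α p ^ (p/q) * C2 α q).toReal * R)) ^ (1/p) :=
          Real.rpow_le_rpow (integral_nonneg fun t => by positivity) hreal (by positivity)
      _ = (C1 α p ^ (p/q) * C2 α q).toReal ^ (1/p) * M * R ^ (1/p) := by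
          rw [Real.mul_rpow (by positivity) (by positivity),
            Real.mul_rpow ENNReal.toReal_nonneg hR0,
            ← Real.rpow_mul hM, mul_one_div, div_self hp0.ne', Real.rpow_one]
          ring
      _ = (C1 α p ^ (p/q) * C2 α q).toReal ^ (1/p) * M *
            (∫ s in Ioi (0:ℝ), ‖f s‖ ^ p) ^ (1/p) := by rw [← hR]
  · rw [integral_undef hI, Real.zero_rpow (one_div_ne_zero hp0.ne')]
    positivity
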